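/- Let M be a real n × n matrix whose symmetric part (M + Mᵀ)/2 is negative definite (i.e. xᵀMx < 0 for every nonzero real vector x). Then I − M is invertible, and every complex eigenvalue ν of the matrix (I − M)⁻¹(I + M) satisfies |ν| < 1. -/

import Mathlib

/-- if the symmetric part of a real matrix `M` is negative definite, then
`I − M` is invertible and every complex eigenvalue of `(I − M)⁻¹(I + M)` has modulus
less than one. -/
theorem cayley_transform_spectrum_lt_one (n : ℕ) (M : Matrix (Fin n) (Fin n) ℝ)
    (hM : ∀ x : Fin n → ℝ, x ≠ 0 → dotProduct x (M.mulVec x) < 0) :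
    IsUnit (1 - M) ∧
      ∀ ν ∈ spectrum ℂ (((1 - M)⁻¹ * (1 + M)).map (algebraMap ℝ ℂ)),
        ‖ν‖ < 1 := by
  classical
  have hMle : ∀ x : Fin n → ℝ, dotProduct x (M.mulVec x) ≤ 0 := by
    intro x
    rcases eq_or_ne x 0 with rfl | hx
    · simp
    · exact (hM x hx).le
  have hU : IsUnit (1 - M) := by
    rw [Matrix.isUnit_iff_isUnit_det, isUnit_iff_ne_zero]
    intro hdet
    obtain ⟨v, hv, hv0⟩ := Matrix.exists_mulVec_eq_zero_iff.mpr hdet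
    have hMv : M.mulVec v = v := by
      rw [Matrix.sub_mulVec, Matrix.one_mulVec, sub_eq_zero] at hv0
      exact hv0.symm
    have h1 : dotProduct v (M.mulVec v) = dotProduct v v := by rw [hMv]
    have h2 : dotProduct v v ≠ 0 := fun h => hv (dotProduct_self_eq_zero.mp h)
    have h3 : 0 ≤ dotProduct v v := Finset.sum_nonneg fun i _ => mul_self_nonneg _
    have := hM v hv
    rw [h1] at this
    linarith [lt_of_le_of_ne h3 (Ne.symm h2)]
  refine ⟨hU, ?_⟩
  intro ν hν
  set f := algebraMap ℝ ℂ with hf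
  set A := M.map f with hAdef
  rw [spectrum.mem_iff, Matrix.isUnit_iff_isUnit_det, isUnit_iff_ne_zero, not_not,
    ← Matrix.exists_mulVec_eq_zero_iff] at hν
  obtain ⟨z, hz, hz0⟩ := hν
  -- turn hz0 into an eigenvector equation
  have hz0' : (((1 - M)⁻¹ * (1 + M)).map f).mulVec z = ν • z := by
    have : (algebraMap ℂ (Matrix (Fin n) (Fin n) ℂ) ν) = ν • 1 := by
      rw [Algebra.algebraMap_eq_smul_one]
    rw [this, Matrix.sub_mulVec, Matrix.smul_mulVec, Matrix.one_mulVec, sub_eq_zero] at hz0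
    exact hz0.symm
  have hdetU : IsUnit (1 - M).det := (Matrix.isUnit_iff_isUnit_det _).mp hU
  have h1M : (1 - M) * (1 - M)⁻¹ = 1 := Matrix.mul_nonsing_inv _ hdetU
  have hmulB : (f.mapMatrix (1 - M)) * (((1 - M)⁻¹ * (1 + M)).map f) = f.mapMatrix (1 + M) := by
    have : ((1 - M)⁻¹ * (1 + M)).map f = f.mapMatrix ((1 - M)⁻¹ * (1 + M)) := rfl
    rw [this, ← map_mul, ← mul_assoc, h1M, one_mul]
  have hmain : z + A.mulVec z = ν • (z - A.mulVec z) := by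
    have h := congrArg (fun B => Matrix.mulVec B z) hmulB
    rw [← Matrix.mulVec_mulVec, hz0', Matrix.mulVec_smul] at h
    have hplus : f.mapMatrix (1 + M) = 1 + A := by
      rw [map_add, map_one]; rfl
    have hminus : f.mapMatrix (1 - M) = 1 - A := by
      rw [map_sub, map_one]; rfl
    rw [hplus, hminus, Matrix.add_mulVec, Matrix.sub_mulVec, Matrix.one_mulVec] at h
    exact h.symm
  set s : ℂ := dotProduct (star z) z with hs
  set a : ℂ := dotProduct (star z) (A.mulVec z) with ha
  have hsa : s + a = ν * (s - a) := by
    have h := congrArg (fun w => dotProduct (star z) w) hmain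
    simpa only [dotProduct_add, dotProduct_sub, dotProduct_smul,
      smul_eq_mul] using h
  set x : Fin n → ℝ := fun j => (z j).re with hx
  set y : Fin n → ℝ := fun j => (z j).im with hy
  -- s is real and positive
  have hs_eval : s = ((∑ j, Complex.normSq (z j) : ℝ) : ℂ) := by
    rw [hs, dotProduct]
    push_cast
    refine Finset.sum_congr rfl fun j _ => ?_
    simp [Complex.normSq_eq_conj_mul_self]
  have hs_im : s.im = 0 := by rw [hs_eval]; simp
  have hs_re : 0 < s.re := by
    rw [hs_eval]
    simp only [Complex.ofReal_re]
    have hjne : ∃ j, z j ≠ 0 := by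
      by_contra h
      push_neg at h
      exact hz (funext h)
    obtain ⟨j, hj⟩ := hjne
    refine Finset.sum_pos' (fun i _ => Complex.normSq_nonneg _) ⟨j, Finset.mem_univ j, ?_⟩
    exact Complex.normSq_pos.mpr hj
  -- real part of a
  have ha_re : a.re = dotProduct x (M.mulVec x) + dotProduct y (M.mulVec y) := by
    have lhs : a.re = ∑ j, ∑ k, M j k * (x j * x k + y j * y k) := by
      rw [ha, dotProduct]
      simp only [Matrix.mulVec, dotProduct, Finset.mul_sum]
      rw [Complex.re_sum]
      refine Finset.sum_congr rfl fun j _ => ?_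
      rw [Complex.re_sum]
      refine Finset.sum_congr rfl fun k _ => ?_
      simp only [hAdef, Matrix.map_apply, hf, Complex.coe_algebraMap, Pi.star_apply,
        RCLike.star_def, Complex.mul_re, Complex.mul_im, Complex.conj_re, Complex.conj_im,
        Complex.ofReal_re, Complex.ofReal_im, hx, hy]
      ring
    have rhs : dotProduct x (M.mulVec x) + dotProduct y (M.mulVec y)
        = ∑ j, ∑ k, M j k * (x j * x k + y j * y k) := by
      simp only [dotProduct, Matrix.mulVec, Finset.mul_sum, ← Finset.sum_add_distrib]
      refine Finset.sum_congr rfl fun j _ => Finset.sum_congr rfl fun k _ => by ring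
    rw [lhs, rhs]
  have ha_neg : a.re < 0 := by
    have hxy : x ≠ 0 ∨ y ≠ 0 := by
      by_contra h
      push_neg at h
      apply hz
      funext j
      have h1 : x j = 0 := by rw [h.1]; rfl
      have h2 : y j = 0 := by rw [h.2]; rfl
      exact Complex.ext h1 h2
    rcases hxy with hxne | hyne
    · have := hM x hxne
      have := hMle y
      rw [ha_re]; linarith
    · have := hM y hyne
      have := hMle x
      rw [ha_re]; linarith
  -- conclude
  have hne : s - a ≠ 0 := by
    intro h
    have := congrArg Complex.re h
    simp only [Complex.sub_re, Complex.zero_re] at this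
    linarith
  have habslt : ‖s + a‖ < ‖s - a‖ := by
    rw [Complex.norm_def, Complex.norm_def]
    apply Real.sqrt_lt_sqrt (Complex.normSq_nonneg _)
    simp only [Complex.normSq_apply, Complex.add_re, Complex.add_im, Complex.sub_re,
      Complex.sub_im, hs_im, zero_add, zero_sub]
    nlinarith [hs_re, ha_neg]
  have habspos : 0 < ‖s - a‖ := norm_pos_iff.mpr hne
  have hmul : ‖ν‖ * ‖s - a‖ < 1 * ‖s - a‖ := by
    rw [one_mul, ← norm_mul, ← hsa]
    exact habslt
  exact lt_of_mul_lt_mul_right hmul habspos.le
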